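/- There is a constant c > 0 such that for every 2π-periodic continuous function f : ℝ → ℝ and every n ≥ 1, max_{x∈ℝ} |f(x) − U_n(f,x)| ≤ c·ω(f, 1/n), where ω is the modulus of continuity of f. -/

import Mathlib

open Real

/-- The fundamental function of trigonometric interpolation at the equidistant
nodes `x_k = 2kπ/(2n+1)`, with the removable singularities filled in by 1. -/
noncomputable def ell (n k : ℕ) (x : ℝ) : ℝ :=
  if Real.sin ((x - 2 * k * π / (2 * n + 1)) / 2) = 0 then 1
  else Real.sin ((2 * n + 1) * (x - 2 * k * π / (2 * n + 1)) / 2) /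
    ((2 * n + 1) * Real.sin ((x - 2 * k * π / (2 * n + 1)) / 2))

/-- The Kis–Vértesi operator. -/
noncomputable def Un (n : ℕ) (f : ℝ → ℝ) (x : ℝ) : ℝ :=
  ∑ k ∈ Finset.range (2 * n + 1),
    f (2 * k * π / (2 * n + 1)) * (4 * (ell n k x) ^ 3 - 3 * (ell n k x) ^ 4)

/-- Modulus of continuity of `f : ℝ → ℝ`. -/
noncomputable def omegaR (f : ℝ → ℝ) (δ : ℝ) : ℝ :=
  sSup {d : ℝ | ∃ x y : ℝ, |x - y| ≤ δ ∧ d = |f x - f y|}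


lemma sin_add_two_mul (A t : ℝ) : Real.sin (A + 2*t) = Real.sin A + 2 * Real.sin t * Real.cos (A + t) := by
  rw [Real.sin_add A (2*t), Real.sin_two_mul, Real.cos_two_mul, Real.cos_add]
  linear_combination (2*Real.sin A) * (Real.sin_sq_add_cos_sq t)

/-- Dirichlet kernel identity. -/
lemma dirichlet_sin (m : ℕ) (t : ℝ) :
    Real.sin ((2*m+1)*t) = Real.sin t * (1 + 2 * ∑ j ∈ Finset.range m, Real.cos (2*(j+1)*t)) := by
  induction m with
  | zero => norm_num
  | succ m ih =>
    rw [Finset.sum_range_succ]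
    have h1 : (2*(m+1:ℕ)+1 : ℝ)*t = (2*m+1)*t + 2*t := by push_cast; ring
    have h2 : (2*((m:ℝ)+1)*t) = ((2*(m:ℝ)+1)*t) + t := by ring
    rw [h1, sin_add_two_mul, ih]
    push_cast
    rw [h2]
    ring

lemma ell_eq_cos_sum (n k : ℕ) (x : ℝ) :
    ell n k x = (1 + 2 * ∑ j ∈ Finset.range n, Real.cos ((j+1)*(x - 2*k*π/(2*n+1)))) / (2*n+1) := by
  rw [ell]
  set u := x - 2*(k:ℝ)*π/(2*n+1) with hu
  split_ifs with h
  · obtain ⟨m, hm⟩ := Real.sin_eq_zero_iff.1 h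
    have hu2 : u = m * (2*π) := by rw [hu]; linarith [hm]
    have hc : ∀ j ∈ Finset.range n, Real.cos ((j+1)*u) = 1 := by
      intro j _
      rw [hu2, show ((j:ℝ)+1) * ((m:ℝ)*(2*π)) = (((j+1)*m : ℤ) : ℝ) * (2*π) by push_cast; ring]
      exact Real.cos_int_mul_two_pi _
    rw [Finset.sum_congr rfl hc]
    have hN : (2*(n:ℝ)+1) ≠ 0 := by positivity
    field_simp
    simp only [Finset.sum_const, Finset.card_range, nsmul_eq_mul, mul_one]
    ring
  · have hd := dirichlet_sin n (u/2)
    have h2 : ∀ j ∈ Finset.range n, Real.cos (2*(j+1)*(u/2)) = Real.cos ((j+1)*u) := by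
      intro j _; ring_nf
    rw [Finset.sum_congr rfl h2] at hd
    have hN : (2*(n:ℝ)+1) ≠ 0 := by positivity
    rw [show (2*(n:ℝ)+1)*u/2 = (2*n+1)*(u/2) by ring, hd]
    rw [div_eq_div_iff (by exact mul_ne_zero hN h) hN]
    ring
noncomputable def cex (x : ℝ) (s : ℤ) : ℂ := Complex.exp (s * x * Complex.I)

lemma cex_add (x : ℝ) (s t : ℤ) : cex x (s+t) = cex x s * cex x t := by
  rw [cex, cex, cex, ← Complex.exp_add]
  push_cast
  ring_nf

lemma cex_zero (x : ℝ) : cex x 0 = 1 := by simp [cex]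

lemma cex_sub_pt (x y : ℝ) (s : ℤ) : cex (x - y) s = cex x s * cex y (-s) := by
  rw [cex, cex, cex, ← Complex.exp_add]
  push_cast
  ring_nf

lemma Icc_succ_int (m : ℕ) : Finset.Icc (-((m:ℤ)+1)) ((m:ℤ)+1) =
    insert (-((m:ℤ)+1)) (insert ((m:ℤ)+1) (Finset.Icc (-(m:ℤ)) m)) := by
  ext a; simp only [Finset.mem_Icc, Finset.mem_insert]; omega

lemma sum_cex_Icc (x : ℝ) (n : ℕ) : ∑ j ∈ Finset.Icc (-(n:ℤ)) n, cex x j =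
    ((1 + 2*∑ j ∈ Finset.range n, Real.cos ((j+1)*x) : ℝ) : ℂ) := by
  induction n with
  | zero => norm_num [cex]
  | succ n ih =>
    rw [show ((n+1:ℕ):ℤ) = ((n:ℤ)+1) from by push_cast; ring]
    rw [Icc_succ_int, Finset.sum_insert (by simp only [Finset.mem_insert, Finset.mem_Icc]; omega),
      Finset.sum_insert (by simp only [Finset.mem_Icc]; omega), ih, Finset.sum_range_succ]
    have h1 : cex x (-((n:ℤ)+1)) + cex x ((n:ℤ)+1) = 2 * Real.cos (((n:ℝ)+1)*x) := by
      rw [cex, cex]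
      rw [show ((-((n:ℤ)+1) : ℤ):ℂ) * x * Complex.I = (-(((n:ℝ)+1)*x) : ℝ) * Complex.I by push_cast; ring,
        show ((((n:ℤ)+1) : ℤ):ℂ) * x * Complex.I = ((((n:ℝ)+1)*x) : ℝ) * Complex.I by push_cast; ring,
        Complex.exp_mul_I, Complex.exp_mul_I]
      push_cast
      simp only [Complex.cos_neg, Complex.sin_neg]
      ring
    rw [← add_assoc, h1]
    push_cast
    ring

lemma ell_complex (n k : ℕ) (x : ℝ) : ((ell n k x : ℝ) : ℂ) =
    (∑ j ∈ Finset.Icc (-(n:ℤ)) n, cex (x - 2*k*π/(2*n+1)) j) / (2*n+1) := by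
  rw [ell_eq_cos_sum, sum_cex_Icc]
  push_cast
  ring

lemma sum_roots (n : ℕ) (s : ℤ) :
    ∑ k ∈ Finset.range (2*n+1), cex (2*(k:ℝ)*π/(2*(n:ℝ)+1)) (-s) =
      if ((2*n+1:ℕ):ℤ) ∣ s then ((2*n+1:ℕ):ℂ) else 0 := by
  have hNC : (2*(n:ℂ)+1) ≠ 0 := by
    have h0 : ((2*n+1 : ℕ):ℂ) ≠ 0 := Nat.cast_ne_zero.mpr (by omega)
    intro h
    exact h0 (by push_cast; linear_combination h)
  have h2pi : (2*(π:ℂ)*Complex.I) ≠ 0 := by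
    simp [Complex.I_ne_zero, Real.pi_ne_zero, Complex.ofReal_ne_zero]
  set z : ℂ := Complex.exp (-(s:ℂ) * (2*π*Complex.I) / (2*n+1)) with hz
  have hterm : ∀ k : ℕ, cex (2*(k:ℝ)*π/(2*(n:ℝ)+1)) (-s) = z^k := by
    intro k
    rw [cex, hz, ← Complex.exp_nat_mul]
    congr 1
    push_cast
    ring
  rw [Finset.sum_congr rfl (fun k _ => hterm k)]
  by_cases hd : ((2*n+1:ℕ):ℤ) ∣ s
  · obtain ⟨m, hm⟩ := hd
    have hz1 : z = 1 := by
      rw [hz, show -(s:ℂ) * (2*π*Complex.I) / (2*(n:ℂ)+1) = ((-m : ℤ):ℂ) * (2*π*Complex.I) by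
        rw [div_eq_iff hNC, hm]; push_cast; ring]
      exact Complex.exp_int_mul_two_pi_mul_I (-m)
    rw [if_pos ⟨m, hm⟩]
    simp [hz1]
  · have hzN : z^(2*n+1) = 1 := by
      rw [hz, ← Complex.exp_nat_mul,
        show ((2*n+1:ℕ):ℂ) * (-(s:ℂ)*(2*π*Complex.I)/(2*(n:ℂ)+1)) = ((-s : ℤ):ℂ) * (2*π*Complex.I) by
          push_cast; field_simp]
      exact Complex.exp_int_mul_two_pi_mul_I (-s)
    have hz1 : z ≠ 1 := by
      intro h1
      rw [hz, Complex.exp_eq_one_iff] at h1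
      obtain ⟨m, hm⟩ := h1
      apply hd
      have h5 : -(s:ℂ) * (2*↑π*Complex.I) = (↑m * (2*↑π*Complex.I)) * (2*(n:ℂ)+1) := by
        rw [← hm, div_mul_cancel₀ _ hNC]
      have h6 : -(s:ℂ) = ↑m * (2*(n:ℂ)+1) := by
        apply mul_right_cancel₀ h2pi
        linear_combination h5
      have h7 : -(s:ℤ) = m * (2*(n:ℤ)+1) := by exact_mod_cast h6
      exact ⟨-m, by push_cast; linear_combination -h7⟩
    rw [geom_sum_eq hz1, hzN, if_neg hd]
    simp
/-! ### Counting machinery -/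

noncomputable def JJ (n : ℕ) : Finset ℤ := Finset.Icc (-(n:ℤ)) n

noncomputable def Pc (n : ℕ) (s : ℤ) : ℕ :=
  ((JJ n ×ˢ JJ n).filter (fun p => p.1 + p.2 = s)).card

noncomputable def Ac (n : ℕ) (t : ℤ) : ℕ :=
  (((JJ n) ×ˢ (JJ n ×ˢ JJ n)).filter (fun r => r.1 + (r.2.1 + r.2.2) = t)).card

noncomputable def Bc (n : ℕ) (t : ℤ) : ℕ :=
  (((JJ n ×ˢ JJ n) ×ˢ (JJ n ×ˢ JJ n)).filter
    (fun r => (r.1.1 + r.1.2) + (r.2.1 + r.2.2) = t)).card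

lemma mem_JJ {n : ℕ} {c : ℤ} : c ∈ JJ n ↔ -(n:ℤ) ≤ c ∧ c ≤ n := by
  simp [JJ, Finset.mem_Icc]

lemma card_filter_prod {α β : Type*} [DecidableEq α] [DecidableEq β]
    (S : Finset α) (T : Finset β) (R : α × β → Prop) [DecidablePred R] :
    ((S ×ˢ T).filter R).card = ∑ a ∈ S, (T.filter (fun b => R (a,b))).card := by
  rw [Finset.card_filter, Finset.sum_product]
  exact Finset.sum_congr rfl fun a _ => (Finset.card_filter _ _).symm

lemma sum_comp_count {α : Type*} {M : Type*} [NonAssocSemiring M]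
    (s : Finset α) (τ : α → ℤ) (T : Finset ℤ) (h : ∀ r ∈ s, τ r ∈ T) (F : ℤ → M) :
    ∑ r ∈ s, F (τ r) = ∑ t ∈ T, ((s.filter (fun r => τ r = t)).card : M) * F t := by
  rw [← Finset.sum_fiberwise_of_maps_to' h F]
  exact Finset.sum_congr rfl fun t _ => by rw [Finset.sum_const, nsmul_eq_mul]

lemma Pc_eq (n : ℕ) (s : ℤ) : Pc n s = ((2*(n:ℤ)+1) - |s|).toNat := by
  rw [Pc]
  have hset : (JJ n ×ˢ JJ n).filter (fun p => p.1 + p.2 = s) =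
      Finset.image (fun a => (a, s-a)) (Finset.Icc (max (-(n:ℤ)) (s-n)) (min (n:ℤ) (s+n))) := by
    ext ⟨a,b⟩
    simp only [Finset.mem_filter, Finset.mem_product, Finset.mem_image, Finset.mem_Icc, mem_JJ,
      Prod.mk.injEq]
    constructor
    · rintro ⟨⟨⟨h1,h2⟩,⟨h3,h4⟩⟩,h5⟩
      exact ⟨a, ⟨by omega, by omega⟩, rfl, by omega⟩
    · rintro ⟨a', ⟨h1,h2⟩, rfl, rfl⟩
      refine ⟨⟨⟨by omega, by omega⟩, ⟨by omega, by omega⟩⟩, by omega⟩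
  rw [hset, Finset.card_image_of_injective _ (fun a b h => by simpa using (Prod.mk.injEq _ _ _ _ ▸ h).1),
    Int.card_Icc]
  rw [Int.abs_eq_natAbs]
  omega

lemma Pc_neg (n : ℕ) (s : ℤ) : Pc n (-s) = Pc n s := by
  rw [Pc_eq, Pc_eq, abs_neg]

lemma Pc_zero (n : ℕ) : Pc n 0 = 2*n+1 := by rw [Pc_eq]; simp; omega

lemma Ac_eq_sum (n : ℕ) (t : ℤ) : Ac n t = ∑ c ∈ JJ n, Pc n (t - c) := by
  rw [Ac, card_filter_prod]
  refine Finset.sum_congr rfl fun c hc => ?_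
  rw [Pc]
  congr 1
  apply Finset.filter_congr
  intro p _
  dsimp only
  constructor <;> intro h <;> omega

lemma Bc_eq_sum (n : ℕ) (t : ℤ) :
    Bc n t = ∑ s ∈ Finset.Icc (-(2*(n:ℤ))) (2*(n:ℤ)), Pc n s * Pc n (t - s) := by
  rw [Bc, card_filter_prod]
  have h1 : ∀ p ∈ JJ n ×ˢ JJ n,
      ((JJ n ×ˢ JJ n).filter (fun q => (p.1 + p.2) + (q.1 + q.2) = t)).card
        = Pc n (t - (p.1 + p.2)) := by
    intro p _
    rw [Pc]
    congr 1
    apply Finset.filter_congr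
    intro q _
    constructor <;> intro h <;> omega
  rw [Finset.sum_congr rfl h1]
  have h2 : ∀ p ∈ JJ n ×ˢ JJ n, p.1 + p.2 ∈ Finset.Icc (-(2*(n:ℤ))) (2*(n:ℤ)) := by
    intro p hp
    rw [Finset.mem_product, mem_JJ, mem_JJ] at hp
    rw [Finset.mem_Icc]
    omega
  rw [sum_comp_count (JJ n ×ˢ JJ n) (fun p => p.1 + p.2) _ h2 (fun s => Pc n (t - s))]
  exact Finset.sum_congr rfl fun s _ => by simp [Pc, Nat.cast_id]

/-! ### Primitive sums -/

lemma sum_abs_Icc (m : ℕ) : ∑ c ∈ Finset.Icc (-(m:ℤ)) m, |c| = m*(m+1) := by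
  induction m with
  | zero => simp
  | succ m ih =>
    rw [show ((m+1:ℕ):ℤ) = ((m:ℤ)+1) from by push_cast; ring, Icc_succ_int,
      Finset.sum_insert (by simp only [Finset.mem_insert, Finset.mem_Icc]; omega),
      Finset.sum_insert (by simp only [Finset.mem_Icc]; omega), ih]
    have h1 : |(-((m:ℤ)+1))| = (m:ℤ)+1 := by rw [abs_neg]; exact abs_of_nonneg (by positivity)
    have h2 : |((m:ℤ)+1)| = (m:ℤ)+1 := abs_of_nonneg (by positivity)
    rw [h1, h2]
    push_cast
    ring

lemma sum_toNat_Icc (m : ℕ) : 2 * ∑ c ∈ Finset.Icc (-(m:ℤ)) m, (c.toNat : ℤ) = m*(m+1) := by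
  induction m with
  | zero => simp
  | succ m ih =>
    rw [show ((m+1:ℕ):ℤ) = ((m:ℤ)+1) from by push_cast; ring, Icc_succ_int,
      Finset.sum_insert (by simp only [Finset.mem_insert, Finset.mem_Icc]; omega),
      Finset.sum_insert (by simp only [Finset.mem_Icc]; omega)]
    have h1 : ((-((m:ℤ)+1)).toNat : ℤ) = 0 := by omega
    have h2 : ((((m:ℤ)+1)).toNat : ℤ) = (m:ℤ)+1 := by omega
    rw [h1, h2]
    push_cast
    push_cast at ih
    linarith [ih]

lemma sum_sq_Icc (m : ℕ) : 3 * ∑ c ∈ Finset.Icc (-(m:ℤ)) m, c^2 = m*(m+1)*(2*m+1) := by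
  induction m with
  | zero => simp
  | succ m ih =>
    rw [show ((m+1:ℕ):ℤ) = ((m:ℤ)+1) from by push_cast; ring, Icc_succ_int,
      Finset.sum_insert (by simp only [Finset.mem_insert, Finset.mem_Icc]; omega),
      Finset.sum_insert (by simp only [Finset.mem_Icc]; omega)]
    push_cast
    push_cast at ih
    linarith [ih]

lemma sum_toNat_sq_Icc (m : ℕ) :
    6 * ∑ c ∈ Finset.Icc (-(m:ℤ)) m, ((c.toNat:ℤ))^2 = m*(m+1)*(2*m+1) := by
  induction m with
  | zero => simp
  | succ m ih =>
    rw [show ((m+1:ℕ):ℤ) = ((m:ℤ)+1) from by push_cast; ring, Icc_succ_int,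
      Finset.sum_insert (by simp only [Finset.mem_insert, Finset.mem_Icc]; omega),
      Finset.sum_insert (by simp only [Finset.mem_Icc]; omega)]
    have h1 : ((-((m:ℤ)+1)).toNat : ℤ) = 0 := by omega
    have h2 : ((((m:ℤ)+1)).toNat : ℤ) = (m:ℤ)+1 := by omega
    rw [h1, h2]
    push_cast
    push_cast at ih
    nlinarith [ih]

lemma sum_neg_Icc {M : Type*} [AddCommMonoid M] (a : ℕ) (g : ℤ → M) :
    ∑ c ∈ Finset.Icc (-(a:ℤ)) a, g (-c) = ∑ c ∈ Finset.Icc (-(a:ℤ)) a, g c := by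
  apply Finset.sum_nbij' (fun c => -c) (fun c => -c) <;>
    simp only [Finset.mem_Icc] <;> intros <;> first | omega | simp
/-! ### Count identities -/

lemma Ac_zero (n : ℕ) : (Ac n 0 : ℤ) = 3*(n:ℤ)^2+3*n+1 := by
  have hpt : ∀ c ∈ JJ n, ((Pc n (0 - c)) : ℤ) = (2*(n:ℤ)+1) - |c| := by
    intro c hc
    rw [mem_JJ] at hc
    rw [Pc_eq, zero_sub, abs_neg, Int.abs_eq_natAbs]
    omega
  rw [Ac_eq_sum]
  push_cast
  rw [Finset.sum_congr rfl hpt, Finset.sum_sub_distrib, Finset.sum_const, JJ, Int.card_Icc,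
    sum_abs_Icc]
  have : (((n:ℤ) + 1 - -(n:ℤ)).toNat : ℤ) = 2*(n:ℤ)+1 := by omega
  rw [nsmul_eq_mul, this]
  ring

lemma Ac_top (n : ℕ) : 2*(Ac n (2*(n:ℤ)+1) : ℤ) = n*(n+1) := by
  have hpt : ∀ c ∈ JJ n, ((Pc n ((2*(n:ℤ)+1) - c)) : ℤ) = (c.toNat : ℤ) := by
    intro c hc
    rw [mem_JJ] at hc
    rw [Pc_eq]
    rw [Int.abs_eq_natAbs]
    omega
  rw [Ac_eq_sum]
  push_cast
  rw [Finset.sum_congr rfl hpt]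
  exact sum_toNat_Icc n

set_option maxHeartbeats 1000000 in
lemma Ac_bot (n : ℕ) : Ac n (-(2*(n:ℤ)+1)) = Ac n (2*(n:ℤ)+1) := by
  calc Ac n (-(2*(n:ℤ)+1)) = ∑ c ∈ JJ n, Pc n (-(2*(n:ℤ)+1) - c) := Ac_eq_sum n _
    _ = ∑ c ∈ Finset.Icc (-(n:ℤ)) n, (fun c => Pc n ((2*(n:ℤ)+1) - c)) (-c) := by
        apply Finset.sum_congr rfl
        intro c _
        dsimp only
        rw [show (2*(n:ℤ)+1) - -c = -((-(2*(n:ℤ)+1)) - c) by ring, Pc_neg]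
    _ = ∑ c ∈ Finset.Icc (-(n:ℤ)) n, Pc n ((2*(n:ℤ)+1) - c) := sum_neg_Icc n (fun c => Pc n ((2*(n:ℤ)+1) - c))
    _ = Ac n (2*(n:ℤ)+1) := (Ac_eq_sum n _).symm

lemma Bc_zero (n : ℕ) : 3*(Bc n 0 : ℤ) = (2*(n:ℤ)+1)*(8*(n:ℤ)^2+8*n+3) := by
  have hpt : ∀ s ∈ Finset.Icc (-(2*(n:ℤ))) (2*(n:ℤ)),
      ((Pc n s :ℤ)) * ((Pc n (0 - s) : ℤ)) =
        (2*(n:ℤ)+1)^2 - (2*(2*(n:ℤ)+1))*|s| + s^2 := by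
    intro s hs
    rw [Finset.mem_Icc] at hs
    rw [Pc_eq, Pc_eq, zero_sub, abs_neg, Int.abs_eq_natAbs]
    have h1 : (((2*(n:ℤ)+1) - (s.natAbs:ℤ)).toNat : ℤ) = (2*(n:ℤ)+1) - (s.natAbs:ℤ) := by omega
    rw [h1]
    have h2 : ((s.natAbs:ℤ))^2 = s^2 := by
      rw [← Int.abs_eq_natAbs, sq_abs]
    nlinarith [h2]
  rw [Bc_eq_sum]
  push_cast
  rw [Finset.sum_congr rfl hpt]
  rw [Finset.sum_add_distrib, Finset.sum_sub_distrib, Finset.sum_const, ← Finset.mul_sum]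
  have e1 := sum_abs_Icc (2*n)
  have e2 := sum_sq_Icc (2*n)
  push_cast at e1 e2
  rw [Int.card_Icc]
  have hc : ((2*(n:ℤ) + 1 - -(2*(n:ℤ))).toNat : ℤ) = 4*(n:ℤ)+1 := by omega
  rw [nsmul_eq_mul, hc]
  nlinarith [e1, e2]

lemma Bc_top (n : ℕ) : 6*(Bc n (2*(n:ℤ)+1) : ℤ) = 4*n*(2*(n:ℤ)+1)*(n+1) := by
  have hpt : ∀ s ∈ Finset.Icc (-(2*(n:ℤ))) (2*(n:ℤ)),
      ((Pc n s : ℤ)) * ((Pc n ((2*(n:ℤ)+1) - s) : ℤ)) =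
        (2*(n:ℤ)+1)*(s.toNat:ℤ) - ((s.toNat:ℤ))^2 := by
    intro s hs
    rw [Finset.mem_Icc] at hs
    rw [Pc_eq, Pc_eq, Int.abs_eq_natAbs, Int.abs_eq_natAbs]
    have h1 : (((2*(n:ℤ)+1) - (s.natAbs:ℤ)).toNat : ℤ) = (2*(n:ℤ)+1) - (s.natAbs:ℤ) := by omega
    have h2 : (((2*(n:ℤ)+1) - ((((2*(n:ℤ)+1) - s)).natAbs:ℤ)).toNat : ℤ) = (s.toNat : ℤ) := by
      omega
    rw [h1, h2]
    have h3 : (s.natAbs:ℤ) * (s.toNat:ℤ) = ((s.toNat:ℤ))^2 := by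
      rcases le_or_gt 0 s with h|h
      · rw [Int.toNat_of_nonneg h]
        rw [show ((s.natAbs:ℤ)) = s from by omega]
        ring
      · simp [Int.toNat_of_nonpos h.le]
    nlinarith [h3]
  rw [Bc_eq_sum]
  push_cast
  rw [Finset.sum_congr rfl hpt]
  rw [Finset.sum_sub_distrib, ← Finset.mul_sum]
  have e1 := sum_toNat_Icc (2*n)
  have e2 := sum_toNat_sq_Icc (2*n)
  push_cast at e1 e2
  nlinarith [e1, e2]

set_option maxHeartbeats 1000000 in
lemma Bc_bot (n : ℕ) : Bc n (-(2*(n:ℤ)+1)) = Bc n (2*(n:ℤ)+1) := by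
  have hset : Finset.Icc (-(2*(n:ℤ))) (2*(n:ℤ)) = Finset.Icc (-((2*n:ℕ):ℤ)) ((2*n:ℕ):ℤ) := by
    push_cast; rfl
  calc Bc n (-(2*(n:ℤ)+1))
      = ∑ s ∈ Finset.Icc (-(2*(n:ℤ))) (2*(n:ℤ)), Pc n s * Pc n (-(2*(n:ℤ)+1) - s) :=
        Bc_eq_sum n _
    _ = ∑ s ∈ Finset.Icc (-((2*n:ℕ):ℤ)) ((2*n:ℕ):ℤ),
          (fun s => Pc n s * Pc n ((2*(n:ℤ)+1) - s)) (-s) := by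
        rw [← hset]
        apply Finset.sum_congr rfl
        intro s _
        dsimp only
        rw [Pc_neg n s, show (2*(n:ℤ)+1) - -s = -((-(2*(n:ℤ)+1)) - s) by ring, Pc_neg]
    _ = ∑ s ∈ Finset.Icc (-((2*n:ℕ):ℤ)) ((2*n:ℕ):ℤ), Pc n s * Pc n ((2*(n:ℤ)+1) - s) :=
        sum_neg_Icc (2*n) (fun s => Pc n s * Pc n ((2*(n:ℤ)+1) - s))
    _ = Bc n (2*(n:ℤ)+1) := by rw [← hset]; exact (Bc_eq_sum n _).symm
/-! ### Analytic expansion -/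

noncomputable def SS (n k : ℕ) (x : ℝ) : ℂ :=
  ∑ j ∈ JJ n, cex (x - 2*k*π/(2*n+1)) j

lemma NC_ne_zero (n : ℕ) : (2*(n:ℂ)+1) ≠ 0 := by
  have h0 : ((2*n+1 : ℕ):ℂ) ≠ 0 := Nat.cast_ne_zero.mpr (by omega)
  intro h
  exact h0 (by push_cast; linear_combination h)

lemma ell_eq_SS (n : ℕ) (x : ℝ) (k : ℕ) :
    ((ell n k x : ℝ) : ℂ) = SS n k x / (2*(n:ℂ)+1) := by
  rw [ell_complex, SS, JJ]

lemma SS_sq (n : ℕ) (x : ℝ) (k : ℕ) : (SS n k x)^2 =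
    ∑ p ∈ JJ n ×ˢ JJ n, cex (x - 2*k*π/(2*n+1)) (p.1 + p.2) := by
  rw [sq, SS, Finset.sum_mul_sum, ← Finset.sum_product']
  exact Finset.sum_congr rfl fun p _ => (cex_add _ _ _).symm

lemma SS_cube (n : ℕ) (x : ℝ) (k : ℕ) : (SS n k x)^3 =
    ∑ r ∈ JJ n ×ˢ (JJ n ×ˢ JJ n), cex (x - 2*k*π/(2*n+1)) (r.1 + (r.2.1 + r.2.2)) := by
  rw [pow_succ', SS_sq]
  rw [SS, Finset.sum_mul_sum, ← Finset.sum_product']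
  exact Finset.sum_congr rfl fun r _ => (cex_add _ _ _).symm

lemma SS_pow4 (n : ℕ) (x : ℝ) (k : ℕ) : (SS n k x)^4 =
    ∑ r ∈ (JJ n ×ˢ JJ n) ×ˢ (JJ n ×ˢ JJ n),
      cex (x - 2*k*π/(2*n+1)) ((r.1.1 + r.1.2) + (r.2.1 + r.2.2)) := by
  rw [show (4:ℕ) = 2*2 from rfl, pow_mul, SS_sq]
  rw [sq, Finset.sum_mul_sum, ← Finset.sum_product']
  exact Finset.sum_congr rfl fun r _ => (cex_add _ _ _).symm

lemma sum_k_cex (n : ℕ) (x : ℝ) (s : ℤ) :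
    ∑ k ∈ Finset.range (2*n+1), cex (x - 2*k*π/(2*n+1)) s =
      cex x s * (if ((2*n+1:ℕ):ℤ) ∣ s then ((2*n+1:ℕ):ℂ) else 0) := by
  have h : ∀ k ∈ Finset.range (2*n+1), cex (x - 2*(k:ℝ)*π/(2*(n:ℝ)+1)) s =
      cex x s * cex (2*(k:ℝ)*π/(2*(n:ℝ)+1)) (-s) := fun k _ => cex_sub_pt x _ s
  rw [Finset.sum_congr rfl h, ← Finset.mul_sum, sum_roots]

lemma sum_SS_sq (n : ℕ) (x : ℝ) :
    ∑ k ∈ Finset.range (2*n+1), (SS n k x)^2 = ((2*n+1:ℕ):ℂ)^2 := by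
  rw [Finset.sum_congr rfl (fun k _ => SS_sq n x k), Finset.sum_comm,
    Finset.sum_congr rfl (fun p _ => sum_k_cex n x (p.1 + p.2))]
  have hmem : ∀ p ∈ JJ n ×ˢ JJ n, p.1 + p.2 ∈ Finset.Icc (-(2*(n:ℤ))) (2*(n:ℤ)) := by
    intro p hp
    rw [Finset.mem_product, mem_JJ, mem_JJ] at hp
    rw [Finset.mem_Icc]
    omega
  rw [sum_comp_count (JJ n ×ˢ JJ n) (fun p => p.1 + p.2) _ hmem
    (fun s => cex x s * (if ((2*n+1:ℕ):ℤ) ∣ s then ((2*n+1:ℕ):ℂ) else 0))]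
  rw [Finset.sum_eq_single 0]
  · have hP : ((JJ n ×ˢ JJ n).filter (fun p => p.1 + p.2 = 0)).card = Pc n 0 := rfl
    rw [hP, Pc_zero, cex_zero, if_pos (dvd_zero _)]
    push_cast
    ring
  · intro s hs hs0
    rw [Finset.mem_Icc] at hs
    have hnd : ¬ ((2*n+1:ℕ):ℤ) ∣ s := by
      rintro ⟨m, rfl⟩
      apply hs0
      have : m = 0 := by
        rcases hs with ⟨h1, h2⟩
        push_cast at h1 h2
        nlinarith [h1, h2, sq_nonneg ((m:ℤ))]
      rw [this, mul_zero]
    rw [if_neg hnd, mul_zero, mul_zero]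
  · intro h0
    exact absurd (by rw [Finset.mem_Icc]; omega) h0

lemma sum_ell_sq (n : ℕ) (x : ℝ) :
    ∑ k ∈ Finset.range (2*n+1), (ell n k x)^2 = 1 := by
  have hc : ((∑ k ∈ Finset.range (2*n+1), (ell n k x)^2 : ℝ) : ℂ) = 1 := by
    push_cast
    rw [Finset.sum_congr rfl (fun k (_ : k ∈ Finset.range (2*n+1)) => by
      rw [ell_eq_SS n x k, div_pow])]
    rw [← Finset.sum_div, sum_SS_sq, div_eq_one_iff_eq (pow_ne_zero 2 (NC_ne_zero n))]
    push_cast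
    ring
  exact_mod_cast hc
/-! ### The partition-of-unity identity -/

lemma sum_SS_cube (n : ℕ) (hn : 1 ≤ n) (x : ℝ) :
    ∑ k ∈ Finset.range (2*n+1), (SS n k x)^3 =
      ((2*n+1:ℕ):ℂ) * ((Ac n (-(2*(n:ℤ)+1)) : ℂ) * cex x (-(2*(n:ℤ)+1))
        + (Ac n 0 : ℂ) + (Ac n (2*(n:ℤ)+1) : ℂ) * cex x (2*(n:ℤ)+1)) := by
  rw [Finset.sum_congr rfl (fun k _ => SS_cube n x k), Finset.sum_comm,
    Finset.sum_congr rfl (fun r _ => sum_k_cex n x (r.1 + (r.2.1 + r.2.2)))]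
  have hmem : ∀ r ∈ JJ n ×ˢ (JJ n ×ˢ JJ n), r.1 + (r.2.1 + r.2.2) ∈
      Finset.Icc (-(3*(n:ℤ))) (3*(n:ℤ)) := by
    intro r hr
    rw [Finset.mem_product, Finset.mem_product, mem_JJ, mem_JJ, mem_JJ] at hr
    rw [Finset.mem_Icc]
    omega
  rw [sum_comp_count (JJ n ×ˢ (JJ n ×ˢ JJ n)) (fun r => r.1 + (r.2.1 + r.2.2)) _ hmem
    (fun s => cex x s * (if ((2*n+1:ℕ):ℤ) ∣ s then ((2*n+1:ℕ):ℂ) else 0))]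
  have hsub : ({-(2*(n:ℤ)+1), 0, 2*(n:ℤ)+1} : Finset ℤ) ⊆
      Finset.Icc (-(3*(n:ℤ))) (3*(n:ℤ)) := by
    intro t ht
    simp only [Finset.mem_insert, Finset.mem_singleton] at ht
    rw [Finset.mem_Icc]
    rcases ht with rfl|rfl|rfl <;> omega
  rw [← Finset.sum_subset hsub ?hv]
  case hv =>
    intro t ht hts
    rw [Finset.mem_Icc] at ht
    have hnd : ¬ ((2*n+1:ℕ):ℤ) ∣ t := by
      rintro ⟨m, rfl⟩
      apply hts
      simp only [Finset.mem_insert, Finset.mem_singleton]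
      have hn1 : (1:ℤ) ≤ (n:ℤ) := by exact_mod_cast hn
      rcases ht with ⟨h1, h2⟩
      push_cast at h1 h2
      have hm1 : m ≤ 1 := by nlinarith [h1, h2, hn1]
      have hm2 : -1 ≤ m := by nlinarith [h1, h2, hn1]
      interval_cases m
      · left; push_cast; ring
      · right; left; ring
      · right; right; push_cast; ring
    rw [if_neg hnd, mul_zero, mul_zero]
  have hd1 : ((2*n+1:ℕ):ℤ) ∣ (-(2*(n:ℤ)+1)) := ⟨-1, by push_cast; ring⟩
  have hd2 : ((2*n+1:ℕ):ℤ) ∣ ((2*(n:ℤ)+1)) := ⟨1, by push_cast; ring⟩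
  rw [Finset.sum_insert (by simp; omega), Finset.sum_insert (by simp; omega),
    Finset.sum_singleton]
  have e1 : ((JJ n ×ˢ (JJ n ×ˢ JJ n)).filter
      (fun r => r.1 + (r.2.1 + r.2.2) = -(2*(n:ℤ)+1))).card = Ac n (-(2*(n:ℤ)+1)) := rfl
  have e2 : ((JJ n ×ˢ (JJ n ×ˢ JJ n)).filter
      (fun r => r.1 + (r.2.1 + r.2.2) = 0)).card = Ac n 0 := rfl
  have e3 : ((JJ n ×ˢ (JJ n ×ˢ JJ n)).filter
      (fun r => r.1 + (r.2.1 + r.2.2) = 2*(n:ℤ)+1)).card = Ac n (2*(n:ℤ)+1) := rfl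
  rw [e1, e2, e3, if_pos hd1, if_pos hd2, if_pos (dvd_zero _), cex_zero]
  ring

lemma sum_SS_pow4 (n : ℕ) (hn : 1 ≤ n) (x : ℝ) :
    ∑ k ∈ Finset.range (2*n+1), (SS n k x)^4 =
      ((2*n+1:ℕ):ℂ) * ((Bc n (-(2*(n:ℤ)+1)) : ℂ) * cex x (-(2*(n:ℤ)+1))
        + (Bc n 0 : ℂ) + (Bc n (2*(n:ℤ)+1) : ℂ) * cex x (2*(n:ℤ)+1)) := by
  rw [Finset.sum_congr rfl (fun k _ => SS_pow4 n x k), Finset.sum_comm,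
    Finset.sum_congr rfl (fun r _ => sum_k_cex n x ((r.1.1 + r.1.2) + (r.2.1 + r.2.2)))]
  have hmem : ∀ r ∈ (JJ n ×ˢ JJ n) ×ˢ (JJ n ×ˢ JJ n), (r.1.1 + r.1.2) + (r.2.1 + r.2.2) ∈
      Finset.Icc (-(4*(n:ℤ))) (4*(n:ℤ)) := by
    intro r hr
    rw [Finset.mem_product, Finset.mem_product, Finset.mem_product, mem_JJ, mem_JJ, mem_JJ,
      mem_JJ] at hr
    rw [Finset.mem_Icc]
    omega
  rw [sum_comp_count ((JJ n ×ˢ JJ n) ×ˢ (JJ n ×ˢ JJ n))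
    (fun r => (r.1.1 + r.1.2) + (r.2.1 + r.2.2)) _ hmem
    (fun s => cex x s * (if ((2*n+1:ℕ):ℤ) ∣ s then ((2*n+1:ℕ):ℂ) else 0))]
  have hsub : ({-(2*(n:ℤ)+1), 0, 2*(n:ℤ)+1} : Finset ℤ) ⊆
      Finset.Icc (-(4*(n:ℤ))) (4*(n:ℤ)) := by
    intro t ht
    simp only [Finset.mem_insert, Finset.mem_singleton] at ht
    rw [Finset.mem_Icc]
    rcases ht with rfl|rfl|rfl <;> omega
  rw [← Finset.sum_subset hsub ?hv]
  case hv =>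
    intro t ht hts
    rw [Finset.mem_Icc] at ht
    have hnd : ¬ ((2*n+1:ℕ):ℤ) ∣ t := by
      rintro ⟨m, rfl⟩
      apply hts
      simp only [Finset.mem_insert, Finset.mem_singleton]
      have hn1 : (1:ℤ) ≤ (n:ℤ) := by exact_mod_cast hn
      rcases ht with ⟨h1, h2⟩
      push_cast at h1 h2
      have hm1 : m ≤ 1 := by nlinarith [h1, h2, hn1]
      have hm2 : -1 ≤ m := by nlinarith [h1, h2, hn1]
      interval_cases m
      · left; push_cast; ring
      · right; left; ring
      · right; right; push_cast; ring
    rw [if_neg hnd, mul_zero, mul_zero]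
  have hd1 : ((2*n+1:ℕ):ℤ) ∣ (-(2*(n:ℤ)+1)) := ⟨-1, by push_cast; ring⟩
  have hd2 : ((2*n+1:ℕ):ℤ) ∣ ((2*(n:ℤ)+1)) := ⟨1, by push_cast; ring⟩
  rw [Finset.sum_insert (by simp; omega), Finset.sum_insert (by simp; omega),
    Finset.sum_singleton]
  have e1 : (((JJ n ×ˢ JJ n) ×ˢ (JJ n ×ˢ JJ n)).filter
      (fun r => (r.1.1 + r.1.2) + (r.2.1 + r.2.2) = -(2*(n:ℤ)+1))).card
        = Bc n (-(2*(n:ℤ)+1)) := rfl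
  have e2 : (((JJ n ×ˢ JJ n) ×ˢ (JJ n ×ˢ JJ n)).filter
      (fun r => (r.1.1 + r.1.2) + (r.2.1 + r.2.2) = 0)).card = Bc n 0 := rfl
  have e3 : (((JJ n ×ˢ JJ n) ×ˢ (JJ n ×ˢ JJ n)).filter
      (fun r => (r.1.1 + r.1.2) + (r.2.1 + r.2.2) = 2*(n:ℤ)+1)).card
        = Bc n (2*(n:ℤ)+1) := rfl
  rw [e1, e2, e3, if_pos hd1, if_pos hd2, if_pos (dvd_zero _), cex_zero]
  ring

/-- The Kis–Vértesi fundamental identity: the weights form a partition of unity. -/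
lemma sum_phi_eq_one (n : ℕ) (hn : 1 ≤ n) (x : ℝ) :
    ∑ k ∈ Finset.range (2*n+1), (4*(ell n k x)^3 - 3*(ell n k x)^4) = 1 := by
  have hc : ((∑ k ∈ Finset.range (2*n+1), (4*(ell n k x)^3 - 3*(ell n k x)^4) : ℝ) : ℂ) = 1 := by
    push_cast
    have hterm : ∀ k ∈ Finset.range (2*n+1),
        4*(((ell n k x : ℝ):ℂ))^3 - 3*(((ell n k x : ℝ):ℂ))^4
          = 4*(SS n k x)^3/(2*(n:ℂ)+1)^3 - 3*(SS n k x)^4/(2*(n:ℂ)+1)^4 := by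
      intro k _
      rw [ell_eq_SS n x k, div_pow, div_pow]
      ring
    rw [Finset.sum_congr rfl hterm, Finset.sum_sub_distrib, ← Finset.sum_div, ← Finset.sum_div,
      ← Finset.mul_sum, ← Finset.mul_sum, sum_SS_cube n hn x, sum_SS_pow4 n hn x]
    have hN := NC_ne_zero n
    have hNc : ((2*n+1:ℕ):ℂ) = 2*(n:ℂ)+1 := by push_cast; ring
    rw [hNc]
    -- cast count identities to ℂ
    have ha0 : ((Ac n 0 : ℂ)) = 3*(n:ℂ)^2+3*n+1 := by exact_mod_cast congrArg (Int.cast : ℤ → ℂ) (Ac_zero n)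
    have haN : 2*((Ac n (2*(n:ℤ)+1) : ℂ)) = (n:ℂ)*((n:ℂ)+1) := by
      exact_mod_cast congrArg (Int.cast : ℤ → ℂ) (Ac_top n)
    have hb0 : 3*((Bc n 0 : ℂ)) = (2*(n:ℂ)+1)*(8*(n:ℂ)^2+8*(n:ℂ)+3) := by
      exact_mod_cast congrArg (Int.cast : ℤ → ℂ) (Bc_zero n)
    have hbN : 6*((Bc n (2*(n:ℤ)+1) : ℂ)) = 4*(n:ℂ)*(2*(n:ℂ)+1)*((n:ℂ)+1) := by
      exact_mod_cast congrArg (Int.cast : ℤ → ℂ) (Bc_top n)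
    rw [Ac_bot n, Bc_bot n]
    have haN' : ((Ac n (2*(n:ℤ)+1) : ℂ)) = (n:ℂ)*((n:ℂ)+1)/2 := by linear_combination haN/2
    have hb0' : ((Bc n 0 : ℂ)) = (2*(n:ℂ)+1)*(8*(n:ℂ)^2+8*(n:ℂ)+3)/3 := by
      linear_combination hb0/3
    have hbN' : ((Bc n (2*(n:ℤ)+1) : ℂ)) = 4*(n:ℂ)*(2*(n:ℂ)+1)*((n:ℂ)+1)/6 := by
      linear_combination hbN/6
    rw [ha0, haN', hb0', hbN']
    set e1 : ℂ := cex x (-(2*(n:ℤ)+1))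
    set e2 : ℂ := cex x (2*(n:ℤ)+1)
    field_simp
    ring
  exact_mod_cast hc
/-! ### Modulus of continuity machinery -/

lemma omega_mem_le {f : ℝ → ℝ} {δ : ℝ} (hb : BddAbove {d : ℝ | ∃ x y : ℝ, |x - y| ≤ δ ∧ d = |f x - f y|})
    {x y : ℝ} (h : |x - y| ≤ δ) : |f x - f y| ≤ omegaR f δ :=
  le_csSup hb ⟨x, y, h, rfl⟩

lemma omega_nonneg {f : ℝ → ℝ} {δ : ℝ}
    (hb : BddAbove {d : ℝ | ∃ x y : ℝ, |x - y| ≤ δ ∧ d = |f x - f y|}) (hδ : 0 ≤ δ) :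
    0 ≤ omegaR f δ := by
  have h0 : (0:ℝ) ∈ {d : ℝ | ∃ x y : ℝ, |x - y| ≤ δ ∧ d = |f x - f y|} :=
    ⟨0, 0, by simpa using hδ, by simp⟩
  exact le_csSup hb h0

lemma omega_steps {f : ℝ → ℝ} {δ : ℝ}
    (hb : BddAbove {d : ℝ | ∃ x y : ℝ, |x - y| ≤ δ ∧ d = |f x - f y|}) (hδ : 0 ≤ δ) (m : ℕ) :
    ∀ x y : ℝ, |x - y| ≤ m * δ → |f x - f y| ≤ m * omegaR f δ := by
  induction m with
  | zero =>
    intro x y h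
    simp only [Nat.cast_zero, zero_mul] at h ⊢
    have : x = y := by
      have := abs_nonneg (x - y)
      have hxy : |x - y| = 0 := le_antisymm h this
      have := abs_eq_zero.1 hxy
      linarith [this]
    rw [this, sub_self, abs_zero]
  | succ m ih =>
    intro x y h
    set z := x + ((m:ℝ)/(m+1))*(y-x) with hz
    have hm1 : (0:ℝ) < (m:ℝ)+1 := by positivity
    have hxz : |x - z| ≤ (m:ℝ) * δ := by
      have : x - z = -(((m:ℝ)/(m+1))*(y-x)) := by rw [hz]; ring
      rw [this, abs_neg, abs_mul, abs_div, abs_of_nonneg (by positivity : (0:ℝ) ≤ (m:ℝ)),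
        abs_of_pos hm1]
      have hyx : |y - x| = |x - y| := abs_sub_comm y x
      rw [hyx]
      rw [div_mul_eq_mul_div, div_le_iff₀ hm1]
      push_cast at h
      nlinarith [h, Nat.cast_nonneg (α := ℝ) m]
    have hzy : |z - y| ≤ δ := by
      have : z - y = ((m:ℝ)/(m+1) - 1)*(y-x) := by rw [hz]; ring
      rw [this]
      have h2 : (m:ℝ)/(m+1) - 1 = -(1/((m:ℝ)+1)) := by field_simp; ring
      rw [h2, abs_mul, abs_neg, abs_div, abs_one, abs_of_pos hm1, abs_sub_comm y x]
      rw [div_mul_eq_mul_div, one_mul, div_le_iff₀ hm1]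
      push_cast at h
      nlinarith [h, hδ, Nat.cast_nonneg (α := ℝ) m]
    calc |f x - f y| ≤ |f x - f z| + |f z - f y| := abs_sub_le _ _ _
      _ ≤ (m:ℝ) * omegaR f δ + omegaR f δ := by
          gcongr ?_ + ?_
          · exact ih x z hxz
          · exact omega_mem_le hb hzy
      _ = ((m:ℕ)+1 : ℝ) * omegaR f δ := by ring
      _ = ((m+1:ℕ) : ℝ) * omegaR f δ := by push_cast; ring

lemma omega_lin {f : ℝ → ℝ} {n : ℕ} (hn : 1 ≤ n)
    (hb : BddAbove {d : ℝ | ∃ x y : ℝ, |x - y| ≤ 1/(n:ℝ) ∧ d = |f x - f y|}) (a b : ℝ) :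
    |f a - f b| ≤ (1 + (n:ℝ)*|a-b|) * omegaR f (1/n) := by
  have hn0 : (0:ℝ) < n := by exact_mod_cast hn
  have hδ : (0:ℝ) ≤ 1/(n:ℝ) := by positivity
  set m : ℕ := ⌈(n:ℝ)*|a-b|⌉₊ with hm
  have h1 : |a - b| ≤ (m:ℝ) * (1/n) := by
    rw [mul_one_div, le_div_iff₀ hn0, mul_comm]
    exact Nat.le_ceil _
  have h2 := omega_steps hb hδ m a b h1
  have h3 : (m:ℝ) ≤ 1 + (n:ℝ)*|a-b| := by
    have := Nat.ceil_lt_add_one (by positivity : (0:ℝ) ≤ (n:ℝ)*|a-b|)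
    rw [hm]
    linarith [this]
  calc |f a - f b| ≤ (m:ℝ) * omegaR f (1/n) := h2
    _ ≤ (1 + (n:ℝ)*|a-b|) * omegaR f (1/n) := by
        apply mul_le_mul_of_nonneg_right h3 (omega_nonneg hb hδ)
/-! ### Pointwise bounds on `ell` -/

lemma abs_ell_le_one (n k : ℕ) (x : ℝ) : |ell n k x| ≤ 1 := by
  rw [ell_eq_cos_sum]
  have hN : (0:ℝ) < 2*(n:ℝ)+1 := by positivity
  rw [abs_div, abs_of_pos hN, div_le_one hN]
  calc |1 + 2 * ∑ j ∈ Finset.range n, Real.cos ((j+1)*(x - 2*k*π/(2*n+1)))|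
      ≤ |(1:ℝ)| + |2 * ∑ j ∈ Finset.range n, Real.cos ((j+1)*(x - 2*k*π/(2*n+1)))| :=
        abs_add_le _ _
    _ ≤ 1 + 2 * ∑ j ∈ Finset.range n, |Real.cos ((j+1)*(x - 2*k*π/(2*n+1)))| := by
        rw [abs_one, abs_mul, abs_two]
        gcongr
        exact Finset.abs_sum_le_sum_abs _ _
    _ ≤ 1 + 2 * ∑ j ∈ Finset.range n, (1:ℝ) := by
        gcongr with j hj
        exact Real.abs_cos_le_one _
    _ = 2*(n:ℝ)+1 := by
        rw [Finset.sum_const, Finset.card_range, nsmul_eq_mul, mul_one]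
        ring

lemma ell_mul_le_one (n k : ℕ) (x : ℝ) (h : Real.sin ((x - 2*k*π/(2*n+1))/2) ≠ 0) :
    |ell n k x| * ((2*(n:ℝ)+1) * |Real.sin ((x - 2*k*π/(2*n+1))/2)|) ≤ 1 := by
  rw [ell, if_neg h, abs_div, abs_mul]
  have hN : (0:ℝ) < 2*(n:ℝ)+1 := by positivity
  rw [abs_of_pos hN]
  have hd : (0:ℝ) < (2*(n:ℝ)+1) * |Real.sin ((x - 2*k*π/(2*n+1))/2)| :=
    mul_pos hN (abs_pos.2 h)
  rw [div_mul_cancel₀ _ (ne_of_gt hd)]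
  exact abs_le.mpr ⟨Real.neg_one_le_sin _, Real.sin_le_one _⟩

/-! ### Main theorem -/

set_option maxHeartbeats 2000000 in
/-- There is a constant `c > 0` such that for every `2π`-periodic continuous
`f` and every `n ≥ 1`, `max_x |f(x) - U_n(f,x)| ≤ c ω(f, 1/n)`. -/
theorem kis_vertesi_jackson :
    ∃ c : ℝ, 0 < c ∧ ∀ f : ℝ → ℝ, Continuous f → (∀ x, f (x + 2 * π) = f x) →
      ∀ n : ℕ, 1 ≤ n → ∀ x : ℝ, |f x - Un n f x| ≤ c * omegaR f (1 / n) := by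
  refine ⟨21, by norm_num, ?_⟩
  intro f hf hper n hn x
  have hp : (0:ℝ) < 2*π := by positivity
  have hPer : Function.Periodic f (2*π) := hper
  have hn0 : (0:ℝ) < n := by exact_mod_cast hn
  -- boundedness and BddAbove
  obtain ⟨M, hM⟩ := (isCompact_Icc (a := (0:ℝ)) (b := 2*π)).exists_bound_of_continuousOn
    hf.continuousOn
  have hMall : ∀ y, |f y| ≤ M := by
    intro y
    have hmem := toIcoMod_mem_Ico hp 0 y
    have h1 : y - toIcoMod hp 0 y = (toIcoDiv hp 0 y : ℤ) • (2*π) := self_sub_toIcoMod hp 0 y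
    rw [zsmul_eq_mul] at h1
    have h2 : toIcoMod hp 0 y = y - (toIcoDiv hp 0 y : ℝ) * (2*π) := by linarith [h1]
    have heq : f (toIcoMod hp 0 y) = f y := by
      rw [h2, ← zsmul_eq_mul, hPer.sub_zsmul_eq]
    rw [← heq]
    have hmem2 : toIcoMod hp 0 y ∈ Set.Icc 0 (2*π) := by
      have := Set.Ico_subset_Icc_self hmem
      simpa using this
    simpa [Real.norm_eq_abs] using hM _ hmem2
  have hb : BddAbove {d : ℝ | ∃ a b : ℝ, |a - b| ≤ 1/(n:ℝ) ∧ d = |f a - f b|} := by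
    refine ⟨2*M, ?_⟩
    rintro d ⟨a, b, _, rfl⟩
    calc |f a - f b| ≤ |f a| + |f b| := by
          rw [sub_eq_add_neg]
          exact (abs_add_le _ _).trans (by rw [abs_neg])
      _ ≤ 2*M := by linarith [hMall a, hMall b]
  set ω := omegaR f (1/(n:ℝ)) with hω
  have hω0 : 0 ≤ ω := omega_nonneg hb (by positivity)
  -- splitting
  have hsplit : f x - Un n f x = ∑ k ∈ Finset.range (2*n+1),
      (f x - f (2*k*π/(2*n+1))) * (4*(ell n k x)^3 - 3*(ell n k x)^4) := by
    calc f x - Un n f x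
        = f x * (∑ k ∈ Finset.range (2*n+1), (4*(ell n k x)^3 - 3*(ell n k x)^4)) - Un n f x := by
          rw [sum_phi_eq_one n hn x, mul_one]
      _ = _ := by
          rw [Un, Finset.mul_sum, ← Finset.sum_sub_distrib]
          exact Finset.sum_congr rfl fun k _ => by ring
  -- per-term bound
  have hterm : ∀ k ∈ Finset.range (2*n+1),
      |(f x - f (2*k*π/(2*n+1))) * (4*(ell n k x)^3 - 3*(ell n k x)^4)|
        ≤ 21 * ω * (ell n k x)^2 := by
    intro k _
    set xk : ℝ := 2*k*π/(2*n+1) with hxk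
    set u : ℝ := x - xk with hu
    set u' : ℝ := toIocMod hp (-π) u with hu'
    set L : ℝ := |ell n k x| with hL
    have hL0 : 0 ≤ L := abs_nonneg _
    have hL1 : L ≤ 1 := abs_ell_le_one n k x
    have hu'mem : u' ∈ Set.Ioc (-π) π := by
      have := toIocMod_mem_Ioc hp (-π) u
      rwa [show -π + 2*π = π by ring] at this
    have hu'abs : |u'| ≤ π := abs_le.mpr ⟨le_of_lt hu'mem.1, hu'mem.2⟩
    have hdiff : u - u' = ((toIocDiv hp (-π) u : ℤ) : ℝ) * (2*π) := by
      have := self_sub_toIocMod hp (-π) u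
      rwa [zsmul_eq_mul] at this
    have hfxk : f xk = f (x - u') := by
      have hxy : x - u' = xk + ((toIocDiv hp (-π) u : ℤ) : ℝ) * (2*π) := by
        rw [← hdiff, hu]
        ring
      rw [hxy, ← zsmul_eq_mul, ← sub_neg_eq_add, ← neg_zsmul, hPer.sub_zsmul_eq]
    have hsin : |Real.sin (u/2)| = |Real.sin (u'/2)| := by
      have h2 : u/2 = u'/2 + ((toIocDiv hp (-π) u : ℤ) : ℝ)*π := by
        linear_combination hdiff/2
      have habs1 : |((-1:ℝ))^(toIocDiv hp (-π) u)| = 1 := by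
        rcases Int.even_or_odd (toIocDiv hp (-π) u) with he|ho
        · rw [he.neg_one_zpow]; simp
        · rw [Odd.neg_one_zpow ho]; simp
      rw [h2, Real.sin_add_int_mul_pi, abs_mul, habs1, one_mul]
    have hjordan : |u'|/π ≤ |Real.sin (u'/2)| := by
      have habs2 : |u'/2| ≤ π/2 := by
        rw [abs_div, abs_two]
        linarith [hu'abs]
      have := Real.mul_abs_le_abs_sin habs2
      calc |u'|/π = 2/π * |u'/2| := by
            rw [abs_div, abs_two]
            ring
        _ ≤ |Real.sin (u'/2)| := this
    -- modulus bound
    have hD : |f x - f xk| ≤ (1 + (n:ℝ)*|u'|) * ω := by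
      rw [hfxk]
      have := omega_lin hn hb x (x - u')
      rwa [show x - (x - u') = u' by ring] at this
    -- phi bound
    have hPhi : |4*(ell n k x)^3 - 3*(ell n k x)^4| ≤ 7*L^3 := by
      calc |4*(ell n k x)^3 - 3*(ell n k x)^4|
          ≤ |4*(ell n k x)^3| + |3*(ell n k x)^4| := by
            rw [sub_eq_add_neg]
            exact (abs_add_le _ _).trans (by rw [abs_neg])
        _ = 4*L^3 + 3*L^4 := by
            rw [abs_mul, abs_mul, abs_pow, abs_pow]
            norm_num [hL]
        _ ≤ 7*L^3 := by nlinarith [mul_le_mul_of_nonneg_left hL1 (pow_nonneg hL0 3)]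
    by_cases hu0 : u' = 0
    · have hfeq : f x = f xk := by
        rw [hfxk, hu0, sub_zero]
      rw [hfeq, sub_self, abs_mul, abs_zero, zero_mul]
      positivity
    · -- u' ≠ 0
      have hU0 : 0 < |u'| := abs_pos.2 hu0
      have hsin0 : Real.sin (u/2) ≠ 0 := by
        intro hz
        rw [hz, abs_zero] at hsin
        rw [← hsin] at hjordan
        rw [div_le_iff₀ Real.pi_pos] at hjordan
        simp only [zero_mul] at hjordan
        linarith [hU0]
      have hkey := ell_mul_le_one n k x (by rw [← hu]; exact hsin0)
      rw [← hu] at hkey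
      -- hkey : L * ((2n+1) * |sin(u/2)|) ≤ 1
      have hUsin : |u'| ≤ π * |Real.sin (u/2)| := by
        rw [hsin]
        have := (div_le_iff₀ Real.pi_pos).1 hjordan
        linarith [this]
      have ha4 : (2*(n:ℝ)+1) * (|u'| * L) ≤ π := by
        calc (2*(n:ℝ)+1) * (|u'| * L) ≤ (2*(n:ℝ)+1) * ((π * |Real.sin (u/2)|) * L) :=
              mul_le_mul_of_nonneg_left (mul_le_mul_of_nonneg_right hUsin hL0)
                (by positivity)
          _ = π * (L * ((2*(n:ℝ)+1) * |Real.sin (u/2)|)) := by ring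
          _ ≤ π * 1 := by
              exact mul_le_mul_of_nonneg_left hkey Real.pi_pos.le
          _ = π := mul_one π
      have h8 : (n:ℝ) * (|u'| * L) ≤ 2 := by
        nlinarith [ha4, Real.pi_le_four, mul_nonneg (abs_nonneg u') hL0, hn0]
      have h7 : L^3 ≤ L^2 := by nlinarith [mul_le_mul_of_nonneg_left hL1 (mul_nonneg hL0 hL0)]
      have h9 : (n:ℝ) * (|u'| * L) * L^2 ≤ 2 * L^2 := mul_le_mul_of_nonneg_right h8 (sq_nonneg L)
      have hcomb : (1 + (n:ℝ) * |u'|) * (7*L^3) ≤ 21*L^2 := by nlinarith [h7, h9, hL0]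
      calc |(f x - f xk) * (4*(ell n k x)^3 - 3*(ell n k x)^4)|
          = |f x - f xk| * |4*(ell n k x)^3 - 3*(ell n k x)^4| := abs_mul _ _
        _ ≤ ((1 + (n:ℝ)*|u'|) * ω) * (7*L^3) :=
            mul_le_mul hD hPhi (abs_nonneg _)
              (by positivity)
        _ = ω * ((1 + (n:ℝ)*|u'|)*(7*L^3)) := by ring
        _ ≤ ω * (21*L^2) := mul_le_mul_of_nonneg_left hcomb hω0
        _ = 21 * ω * (ell n k x)^2 := by rw [hL, sq_abs]; ring
  -- sum up
  calc |f x - Un n f x|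
      = |∑ k ∈ Finset.range (2*n+1),
          (f x - f (2*k*π/(2*n+1))) * (4*(ell n k x)^3 - 3*(ell n k x)^4)| := by rw [hsplit]
    _ ≤ ∑ k ∈ Finset.range (2*n+1),
          |(f x - f (2*k*π/(2*n+1))) * (4*(ell n k x)^3 - 3*(ell n k x)^4)| :=
        Finset.abs_sum_le_sum_abs _ _
    _ ≤ ∑ k ∈ Finset.range (2*n+1), 21 * ω * (ell n k x)^2 := Finset.sum_le_sum hterm
    _ = 21 * ω * ∑ k ∈ Finset.range (2*n+1), (ell n k x)^2 := by rw [Finset.mul_sum]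
    _ = 21 * ω := by rw [sum_ell_sq n x, mul_one]
    _ = 21 * omegaR f (1 / n) := by rw [hω]
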